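/- (Criterion for convergents of Laurent series) Let p, q ∈ ℚ[z] be coprime with q ≠ 0, and let f ∈ ℚ((z⁻¹)) be non-rational. Then deg(q f - p) < -deg(q) if and only if p/q is a convergent of the continued fraction expansion of f. -/

import Mathlib

noncomputable section
open Classical Polynomial

/-- The space ℚ((z⁻¹)) of formal Laurent series over ℚ (variable X = z⁻¹). -/
abbrev LS := LaurentSeries ℚ

/-- Degree of a formal Laurent series in z (minus the order in X = z⁻¹). -/
def ldeg (f : LS) : ℤ := -f.order


def Dmet (f g : LS) : ℝ := if f = g then 0 else (2 : ℝ) ^ ldeg (f - g)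

/-- The element z of ℚ((z⁻¹)): the series X⁻¹ where X = z⁻¹. -/
def Zl : LS := HahnSeries.single (-1 : ℤ) (1 : ℚ)

/-- The polynomial part ⌊f⌋ of a formal Laurent series: the terms with
nonnegative powers of z, i.e. nonpositive exponents of X = z⁻¹. -/
def polyPart (f : LS) : LS :=
  ⟨fun n => if n ≤ 0 then f.coeff n else 0, by
    refine f.isPWO_support'.mono fun n hn => ?_
    simp only [Function.mem_support] at hn ⊢
    intro h; apply hn; split <;> simp [h]⟩

/-- f is a rational function, i.e. a quotient of two polynomials in ℚ[z]. -/
def IsRatFn (f : LS) : Prop :=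
  ∃ P Q : Polynomial ℚ, Q ≠ 0 ∧ f * Polynomial.aeval Zl Q = Polynomial.aeval Zl P

/-- The sequence f₀ = f, f_{n+1} = (fₙ - ⌊fₙ⌋)⁻¹ of the continued fraction
algorithm; the partial quotients are aₙ = ⌊fₙ⌋. -/
def Fseq (f : LS) : ℕ → LS
  | 0 => f
  | n + 1 => (Fseq f n - polyPart (Fseq f n))⁻¹

/-- Continued fraction numerators: p₀ = a₀, p₁ = a₁a₀ + 1, pₙ = aₙpₙ₋₁ + pₙ₋₂. -/
def cfP (a : ℕ → LS) : ℕ → LS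
  | 0 => a 0
  | 1 => a 1 * a 0 + 1
  | n + 2 => a (n + 2) * cfP a (n + 1) + cfP a n

/-- Continued fraction denominators: q₀ = 1, q₁ = a₁, qₙ = aₙqₙ₋₁ + qₙ₋₂. -/
def cfQ (a : ℕ → LS) : ℕ → LS
  | 0 => 1
  | 1 => a 1
  | n + 2 => a (n + 2) * cfQ a (n + 1) + cfQ a n


/-- The partial quotients of the continued fraction algorithm applied to f. -/
def cfa (f : LS) (n : ℕ) : LS := polyPart (Fseq f n)

namespace CC

lemma ldeg_zero : ldeg 0 = 0 := by simp [ldeg, HahnSeries.order_zero]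
lemma ldeg_one : ldeg 1 = 0 := by simp [ldeg, HahnSeries.order_one]
lemma ldeg_mul {a b : LS} (ha : a ≠ 0) (hb : b ≠ 0) : ldeg (a*b) = ldeg a + ldeg b := by
  simp [ldeg, HahnSeries.order_mul ha hb]; ring
lemma ldeg_neg (a : LS) : ldeg (-a) = ldeg a := by simp [ldeg, HahnSeries.order_neg]
lemma ldeg_inv {a : LS} (ha : a ≠ 0) : ldeg a⁻¹ = -ldeg a := by
  have h1 : a * a⁻¹ = 1 := mul_inv_cancel₀ ha
  have := ldeg_mul ha (inv_ne_zero ha)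
  rw [h1, ldeg_one] at this; omega

/-- characterization of `c ≤ ldeg` style: if coeff at -c nonzero then ldeg ≥ c -/
lemma le_ldeg_of_coeff {a : LS} {c : ℤ} (h : a.coeff (-c) ≠ 0) : c ≤ ldeg a := by
  have := HahnSeries.order_le_of_coeff_ne_zero h
  simp only [ldeg]; omega

lemma coeff_eq_zero_of_ldeg_lt {a : LS} {i : ℤ} (hi : ldeg a < -i) (ha : a ≠ 0) :
    a.coeff i = 0 := by
  apply HahnSeries.coeff_eq_zero_of_lt_order
  simp only [ldeg] at hi; omega

/-- if orders differ, the sum is nonzero with ldeg the max -/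
lemma ldeg_add_eq_left {a b : LS} (ha : a ≠ 0) (hb : b ≠ 0) (h : ldeg b < ldeg a) :
    a + b ≠ 0 ∧ ldeg (a+b) = ldeg a := by
  have hco : (a+b).coeff a.order = a.coeff a.order := by
    rw [HahnSeries.coeff_add]
    rw [HahnSeries.coeff_eq_zero_of_lt_order (x := b) (i := a.order)
      (by simp only [ldeg] at h; omega), add_zero]
  have hne : (a+b).coeff a.order ≠ 0 := by
    rw [hco]; exact HahnSeries.coeff_order_eq_zero.not.mpr ha
  have hab : a + b ≠ 0 := fun h0 => hne (by simp [h0])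
  refine ⟨hab, le_antisymm ?_ ?_⟩
  · by_contra hlt
    push_neg at hlt
    have h2 : (a+b).coeff ((a+b).order) ≠ 0 := HahnSeries.coeff_order_eq_zero.not.mpr hab
    have : (a+b).coeff ((a+b).order) = 0 := by
      rw [HahnSeries.coeff_add,
        HahnSeries.coeff_eq_zero_of_lt_order (x := a) (i := (a+b).order)
          (by simp only [ldeg] at hlt ⊢; omega),
        HahnSeries.coeff_eq_zero_of_lt_order (x := b) (i := (a+b).order)
          (by simp only [ldeg] at h hlt; omega), add_zero]
    exact h2 this
  · have := HahnSeries.order_le_of_coeff_ne_zero hne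
    simp only [ldeg]; omega

lemma ldeg_add_le {a b : LS} (hab : a + b ≠ 0) (ha : a ≠ 0) (hb : b ≠ 0) :
    ldeg (a+b) ≤ max (ldeg a) (ldeg b) := by
  rcases lt_trichotomy (ldeg a) (ldeg b) with h | h | h
  · rw [add_comm]; rw [(ldeg_add_eq_left hb ha h).2]; exact le_max_right _ _
  · by_contra hlt
    push_neg at hlt
    have h1 : (a+b).coeff (-(ldeg (a+b))) ≠ 0 := by
      have := HahnSeries.coeff_order_eq_zero.not.mpr hab
      simpa [ldeg] using this
    rw [HahnSeries.coeff_add] at h1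
    rw [coeff_eq_zero_of_ldeg_lt (by omega) ha, coeff_eq_zero_of_ldeg_lt (by omega) hb] at h1
    simp at h1
  · rw [(ldeg_add_eq_left ha hb h).2]; exact le_max_left _ _


abbrev av (P : Polynomial ℚ) : LS := Polynomial.aeval Zl P

lemma av_monomial (k : ℕ) (c : ℚ) :
    av (Polynomial.monomial k c) = HahnSeries.single (-(k:ℤ)) c := by
  rw [show Polynomial.monomial k c = Polynomial.C c * Polynomial.X ^ k by
    rw [Polynomial.C_mul_X_pow_eq_monomial]]
  simp only [av, map_mul, map_pow, Polynomial.aeval_X, Polynomial.aeval_C]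
  rw [show (algebraMap ℚ LS) = (HahnSeries.C : ℚ →+* LS) from Subsingleton.elim _ _,
    HahnSeries.C_apply]
  rw [Zl, HahnSeries.single_pow, HahnSeries.single_mul_single]
  norm_num

lemma coeff_av (P : Polynomial ℚ) (n : ℤ) :
    (av P).coeff n = if n ≤ 0 then P.coeff (-n).toNat else 0 := by
  induction P using Polynomial.induction_on' with
  | add p q hp hq =>
    simp only [av, map_add] at hp hq ⊢
    rw [HahnSeries.coeff_add, hp, hq]; split <;> simp
  | monomial k c =>
    rw [av_monomial, HahnSeries.coeff_single, Polynomial.coeff_monomial]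
    by_cases h : n = -(k:ℤ)
    · subst h; simp
    · rw [if_neg h]
      split
      · rw [if_neg (by omega)]
      · rfl

lemma polyPart_coeff (f : LS) (n : ℤ) :
    (polyPart f).coeff n = if n ≤ 0 then f.coeff n else 0 := rfl

/-- the support of polyPart f is finite -/
lemma polyPart_support_finite (f : LS) : (polyPart f).support.Finite := by
  by_cases hne : (polyPart f).support.Nonempty
  · have hwf : (polyPart f).support.IsWF := (polyPart f).isPWO_support.isWF
    apply Set.Finite.subset (Set.finite_Icc (hwf.min hne) 0)
    intro n hn
    refine ⟨hwf.min_le hne hn, ?_⟩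
    by_contra hn0
    push_neg at hn0
    simp only [HahnSeries.mem_support, polyPart_coeff, if_neg (by omega : ¬ n ≤ 0)] at hn
    exact hn rfl
  · rw [Set.not_nonempty_iff_eq_empty] at hne
    rw [hne]; exact Set.finite_empty

def toPoly (f : LS) : Polynomial ℚ :=
  ∑ n ∈ (polyPart_support_finite f).toFinset, Polynomial.monomial (-n).toNat (f.coeff n)

lemma av_toPoly (f : LS) : av (toPoly f) = polyPart f := by
  rw [toPoly]
  simp only [av, map_sum]
  apply HahnSeries.coeff_injective
  funext m
  have hco : ∀ s : Finset ℤ, (∑ n ∈ s, av (Polynomial.monomial (-n).toNat (f.coeff n))).coeff m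
      = ∑ n ∈ s, (av (Polynomial.monomial (-n).toNat (f.coeff n))).coeff m := by
    intro s
    induction s using Finset.induction with
    | empty => simp
    | insert _ _ hns ih => rw [Finset.sum_insert hns, Finset.sum_insert hns, HahnSeries.coeff_add, ih]
  rw [hco]
  have key : ∀ n ∈ (polyPart_support_finite f).toFinset,
      (av (Polynomial.monomial (-n).toNat (f.coeff n))).coeff m
        = if m = n then f.coeff n else 0 := by
    intro n hn
    simp only [Set.Finite.mem_toFinset, HahnSeries.mem_support, polyPart_coeff] at hn
    have hn0 : n ≤ 0 := by by_contra h; exact hn (if_neg h)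
    rw [av_monomial, HahnSeries.coeff_single]
    congr 1
    simp only [eq_iff_iff]
    omega
  rw [Finset.sum_congr rfl key]
  rw [Finset.sum_ite_eq (polyPart_support_finite f).toFinset m (fun n => f.coeff n)]
  simp only [Set.Finite.mem_toFinset, HahnSeries.mem_support, polyPart_coeff, ne_eq, ite_not]
  by_cases hm : m ≤ 0
  · simp only [if_pos hm]
    by_cases h0 : f.coeff m = 0 <;> simp [h0]
  · simp [hm]

lemma ldeg_le {a : LS} {c : ℤ} (ha : a ≠ 0) (h : ∀ i, i < -c → a.coeff i = 0) : ldeg a ≤ c := by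
  by_contra hlt
  push_neg at hlt
  have h2 := HahnSeries.coeff_order_eq_zero.not.mpr ha
  exact h2 (h a.order (by simp only [ldeg] at hlt; omega))

lemma av_ne_zero {P : Polynomial ℚ} (hP : P ≠ 0) : av P ≠ 0 := by
  intro h0
  have : (av P).coeff (-(P.natDegree : ℤ)) = P.coeff P.natDegree := by
    rw [coeff_av, if_pos (by omega)]
    congr 1; omega
  rw [h0] at this
  simp only [HahnSeries.coeff_zero] at this
  exact Polynomial.leadingCoeff_ne_zero.mpr hP this.symm

lemma av_injective : Function.Injective av := by
  have hker : ∀ P : Polynomial ℚ, av P = 0 → P = 0 := by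
    intro P h
    by_contra hP
    exact av_ne_zero hP h
  intro P Q h
  have h2 : av (P - Q) = 0 := by
    rw [show av (P - Q) = av P - av Q from map_sub _ _ _, h, sub_self]
  have := hker _ h2
  rwa [sub_eq_zero] at this

lemma ldeg_av {P : Polynomial ℚ} (hP : P ≠ 0) : ldeg (av P) = P.natDegree := by
  apply le_antisymm
  · apply ldeg_le (av_ne_zero hP)
    intro i hi
    rw [coeff_av, if_pos (by omega)]
    apply Polynomial.coeff_eq_zero_of_natDegree_lt
    omega
  · apply le_ldeg_of_coeff
    have : (av P).coeff (-(P.natDegree : ℤ)) = P.coeff P.natDegree := by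
      rw [coeff_av, if_pos (by omega)]; congr 1; omega
    rw [this]
    exact Polynomial.leadingCoeff_ne_zero.mpr hP

lemma ldeg_av_nonneg {P : Polynomial ℚ} (hP : P ≠ 0) : 0 ≤ ldeg (av P) := by
  rw [ldeg_av hP]; positivity

/-- the fractional part has negative degree (when nonzero) -/
lemma ldeg_frac_neg {f : LS} (h : f - polyPart f ≠ 0) : ldeg (f - polyPart f) < 0 := by
  have : ldeg (f - polyPart f) ≤ -1 := by
    apply ldeg_le h
    intro i hi
    have hi0 : i ≤ 0 := by omega
    simp [HahnSeries.coeff_sub, polyPart_coeff, if_pos hi0]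
  omega

/-- if ldeg g ≥ 1 then polyPart g ≠ 0 and has the same degree -/
lemma polyPart_ldeg {g : LS} (hg : g ≠ 0) (h1 : 1 ≤ ldeg g) :
    polyPart g ≠ 0 ∧ ldeg (polyPart g) = ldeg g := by
  have hc : (polyPart g).coeff (-(ldeg g)) = g.coeff (-(ldeg g)) := by
    rw [polyPart_coeff, if_pos (by omega)]
  have hgc : g.coeff (-(ldeg g)) ≠ 0 := by
    have := HahnSeries.coeff_order_eq_zero.not.mpr hg
    simpa only [ldeg, neg_neg] using this
  have hne : polyPart g ≠ 0 := by
    intro h0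
    rw [h0] at hc
    exact hgc (by simpa using hc.symm)
  refine ⟨hne, le_antisymm ?_ ?_⟩
  · apply ldeg_le hne
    intro i hi
    rw [polyPart_coeff]
    split
    · exact coeff_eq_zero_of_ldeg_lt (by omega) hg
    · rfl
  · exact le_ldeg_of_coeff (hc.symm ▸ hgc)

lemma ratFn_av (P : Polynomial ℚ) : IsRatFn (av P) :=
  ⟨P, 1, one_ne_zero, by simp⟩

variable {f : LS}

lemma notRat_Fseq (hf : ¬ IsRatFn f) : ∀ n, ¬ IsRatFn (Fseq f n) := by
  intro n
  induction n with
  | zero => exact hf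
  | succ n ih =>
    set g := Fseq f n - polyPart (Fseq f n) with hg
    have hgne : g ≠ 0 := by
      intro h0
      apply ih
      have : Fseq f n = av (toPoly (Fseq f n)) := by
        rw [av_toPoly]
        have := sub_eq_zero.mp h0
        exact this
      rw [this]; exact ratFn_av _
    have hgnotrat : ¬ IsRatFn g := by
      rintro ⟨P, Q, hQ, hPQ'⟩
      have hPQ : g * av Q = av P := hPQ'
      apply ih
      refine ⟨P + toPoly (Fseq f n) * Q, Q, hQ, ?_⟩
      have h2 : av (P + toPoly (Fseq f n) * Q) = av P + av (toPoly (Fseq f n)) * av Q := by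
        rw [show av (P + toPoly (Fseq f n) * Q) = av P + av (toPoly (Fseq f n)) * av Q by
          simp [map_add, map_mul]]
      show Fseq f n * av Q = av _
      rw [h2, av_toPoly, ← hPQ, hg]
      ring
    rintro ⟨P, Q, hQ, hPQ'⟩
    have hPQ : (Fseq f (n+1)) * av Q = av P := hPQ'
    apply hgnotrat
    have hinv : Fseq f (n+1) = g⁻¹ := rfl
    rw [hinv] at hPQ
    have havQ : av Q ≠ 0 := av_ne_zero hQ
    have havP : av P ≠ 0 := by
      rw [← hPQ]
      exact mul_ne_zero (inv_ne_zero hgne) havQ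
    have hP : P ≠ 0 := by intro h0; rw [h0] at havP; exact havP (map_zero _)
    refine ⟨Q, P, hP, ?_⟩
    show g * av P = av Q
    rw [← hPQ]
    field_simp

lemma Fseq_ne_zero (hf : ¬ IsRatFn f) (n : ℕ) : Fseq f n ≠ 0 := by
  intro h0
  exact notRat_Fseq hf n (h0 ▸ ⟨0, 1, one_ne_zero, by simp⟩)

lemma frac_ne_zero (hf : ¬ IsRatFn f) (n : ℕ) : Fseq f n - polyPart (Fseq f n) ≠ 0 := by
  intro h0
  apply notRat_Fseq hf n
  have : Fseq f n = av (toPoly (Fseq f n)) := by rw [av_toPoly]; exact sub_eq_zero.mp h0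
  rw [this]; exact ratFn_av _

lemma ldeg_Fseq_succ (hf : ¬ IsRatFn f) (n : ℕ) : 1 ≤ ldeg (Fseq f (n+1)) := by
  have h1 : ldeg (Fseq f n - polyPart (Fseq f n)) < 0 := ldeg_frac_neg (frac_ne_zero hf n)
  have : Fseq f (n+1) = (Fseq f n - polyPart (Fseq f n))⁻¹ := rfl
  rw [this, ldeg_inv (frac_ne_zero hf n)]
  omega

lemma cfa_ne_zero (hf : ¬ IsRatFn f) (n : ℕ) : cfa f (n+1) ≠ 0 :=
  (polyPart_ldeg (Fseq_ne_zero hf (n+1)) (ldeg_Fseq_succ hf n)).1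

lemma ldeg_cfa (hf : ¬ IsRatFn f) (n : ℕ) : ldeg (cfa f (n+1)) = ldeg (Fseq f (n+1)) :=
  (polyPart_ldeg (Fseq_ne_zero hf (n+1)) (ldeg_Fseq_succ hf n)).2

lemma ldeg_cfa_pos (hf : ¬ IsRatFn f) (n : ℕ) : 1 ≤ ldeg (cfa f (n+1)) := by
  rw [ldeg_cfa hf]; exact ldeg_Fseq_succ hf n

lemma cfa_ne_zero' (hf : ¬ IsRatFn f) {n : ℕ} (hn : n ≠ 0) : cfa f n ≠ 0 := by
  obtain ⟨m, rfl⟩ := Nat.exists_eq_succ_of_ne_zero hn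
  exact cfa_ne_zero hf m

lemma ldeg_cfa' (hf : ¬ IsRatFn f) {n : ℕ} (hn : n ≠ 0) : ldeg (cfa f n) = ldeg (Fseq f n) := by
  obtain ⟨m, rfl⟩ := Nat.exists_eq_succ_of_ne_zero hn
  exact ldeg_cfa hf m

lemma ldeg_cfa_pos' (hf : ¬ IsRatFn f) {n : ℕ} (hn : n ≠ 0) : 1 ≤ ldeg (cfa f n) := by
  obtain ⟨m, rfl⟩ := Nat.exists_eq_succ_of_ne_zero hn
  exact ldeg_cfa_pos hf m

lemma Fseq_rec (n : ℕ) : Fseq f n = cfa f n + (Fseq f (n+1))⁻¹ := by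
  have : Fseq f (n+1) = (Fseq f n - polyPart (Fseq f n))⁻¹ := rfl
  rw [this, inv_inv, cfa]
  ring

def sP (f : LS) : ℕ → LS
  | 0 => 0
  | 1 => 1
  | n + 2 => cfa f n * sP f (n+1) + sP f n

def sQ (f : LS) : ℕ → LS
  | 0 => 1
  | 1 => 0
  | n + 2 => cfa f n * sQ f (n+1) + sQ f n

lemma cfPQ_eq (f : LS) : ∀ n, cfP (cfa f) n = sP f (n+2) ∧ cfQ (cfa f) n = sQ f (n+2) := by
  intro n
  induction n using Nat.strong_induction_on with
  | _ n ih =>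
    match n with
    | 0 => constructor <;> simp [cfP, cfQ, sP, sQ]
    | 1 =>
      constructor <;> simp [cfP, cfQ, sP, sQ] <;> ring
    | (m+2) =>
      have h1 := ih (m+1) (by omega)
      have h0 := ih m (by omega)
      constructor
      · show cfP (cfa f) (m+2) = sP f (m+4)
        rw [show cfP (cfa f) (m+2) = cfa f (m+2) * cfP (cfa f) (m+1) + cfP (cfa f) m from rfl,
          show sP f (m+4) = cfa f (m+2) * sP f (m+3) + sP f (m+2) from rfl, h1.1, h0.1]
      · show cfQ (cfa f) (m+2) = sQ f (m+4)
        rw [show cfQ (cfa f) (m+2) = cfa f (m+2) * cfQ (cfa f) (m+1) + cfQ (cfa f) m from rfl,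
          show sQ f (m+4) = cfa f (m+2) * sQ f (m+3) + sQ f (m+2) from rfl, h1.2, h0.2]

lemma det_sPQ (f : LS) (n : ℕ) :
    sP f (n+1) * sQ f n - sP f n * sQ f (n+1) = (-1)^n := by
  induction n with
  | zero => simp [sP, sQ]
  | succ n ih =>
    rw [show sP f (n+2) = cfa f n * sP f (n+1) + sP f n from rfl,
      show sQ f (n+2) = cfa f n * sQ f (n+1) + sQ f n from rfl, pow_succ]
    linear_combination (-1 : LS) * ih

lemma key_identity {f : LS} (hf : ¬ IsRatFn f) (n : ℕ) :
    f * (sQ f (n+1) * Fseq f n + sQ f n) = sP f (n+1) * Fseq f n + sP f n := by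
  induction n with
  | zero => simp [sP, sQ, Fseq]
  | succ n ih =>
    have hF : (Fseq f (n+1))⁻¹ * Fseq f (n+1) = 1 := inv_mul_cancel₀ (Fseq_ne_zero hf (n+1))
    rw [Fseq_rec n] at ih
    rw [show sP f (n+2) = cfa f n * sP f (n+1) + sP f n from rfl,
      show sQ f (n+2) = cfa f n * sQ f (n+1) + sQ f n from rfl]
    linear_combination Fseq f (n+1) * ih - (f * sQ f (n+1) - sP f (n+1)) * hF

def gap (f : LS) (n : ℕ) : LS := f * sQ f n - sP f n

lemma gap_rec {f : LS} (hf : ¬ IsRatFn f) (n : ℕ) :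
    gap f (n+1) * Fseq f n = -(gap f n) := by
  have := key_identity hf n
  simp only [gap]
  linear_combination this

def pA (f : LS) (n : ℕ) : Polynomial ℚ := toPoly (Fseq f n)

lemma av_pA (f : LS) (n : ℕ) : av (pA f n) = cfa f n := av_toPoly _

def pP (f : LS) : ℕ → Polynomial ℚ
  | 0 => 0
  | 1 => 1
  | n + 2 => pA f n * pP f (n+1) + pP f n

def pQ (f : LS) : ℕ → Polynomial ℚ
  | 0 => 1
  | 1 => 0
  | n + 2 => pA f n * pQ f (n+1) + pQ f n

lemma av_pPQ (f : LS) : ∀ n, av (pP f n) = sP f n ∧ av (pQ f n) = sQ f n := by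
  intro n
  induction n using Nat.strong_induction_on with
  | _ n ih =>
    match n with
    | 0 => constructor <;> simp [pP, pQ, sP, sQ, av]
    | 1 => constructor <;> simp [pP, pQ, sP, sQ, av]
    | (m+2) =>
      have h1 := ih (m+1) (by omega)
      have h0 := ih m (by omega)
      constructor
      · show av (pA f m * pP f (m+1) + pP f m) = cfa f m * sP f (m+1) + sP f m
        rw [show av (pA f m * pP f (m+1) + pP f m)
            = av (pA f m) * av (pP f (m+1)) + av (pP f m) by simp [av, map_add, map_mul]]
        rw [h1.1, h0.1, av_pA]
      · show av (pA f m * pQ f (m+1) + pQ f m) = cfa f m * sQ f (m+1) + sQ f m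
        rw [show av (pA f m * pQ f (m+1) + pQ f m)
            = av (pA f m) * av (pQ f (m+1)) + av (pQ f m) by simp [av, map_add, map_mul]]
        rw [h1.2, h0.2, av_pA]

lemma det_pPQ (f : LS) (n : ℕ) :
    pP f (n+1) * pQ f n - pP f n * pQ f (n+1) = (-1)^n := by
  induction n with
  | zero => simp [pP, pQ]
  | succ n ih =>
    rw [show pP f (n+2) = pA f n * pP f (n+1) + pP f n from rfl,
      show pQ f (n+2) = pA f n * pQ f (n+1) + pQ f n from rfl, pow_succ]
    linear_combination (-1 : Polynomial ℚ) * ih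

lemma coprime_pPQ (f : LS) (n : ℕ) : IsCoprime (pP f n) (pQ f n) := by
  refine ⟨-((-1)^n * pQ f (n+1)), (-1)^n * pP f (n+1), ?_⟩
  have hd := det_pPQ f n
  have he : ((-1 : Polynomial ℚ)^n) * ((-1 : Polynomial ℚ)^n) = 1 := by
    rw [← pow_add]
    exact Even.neg_one_pow ⟨n, by ring⟩
  have hor : -((-1:Polynomial ℚ)^n * pQ f (n+1)) * pP f n + (-1)^n * pP f (n+1) * pQ f n
      = (-1)^n * (pP f (n+1) * pQ f n - pP f n * pQ f (n+1)) := by ring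
  rw [hor, hd, he]

lemma neg_one_pow_ne_zero (n : ℕ) : ((-1 : Polynomial ℚ)^n) ≠ 0 :=
  pow_ne_zero n (by norm_num)

lemma not_both_zero (f : LS) (n : ℕ) : ¬ (pP f n = 0 ∧ pQ f n = 0) := by
  rintro ⟨h1, h2⟩
  have hd := det_pPQ f n
  rw [h1, h2] at hd
  simp only [mul_zero, zero_mul, sub_zero] at hd
  exact neg_one_pow_ne_zero n hd.symm

lemma gap_ne_zero {f : LS} (hf : ¬ IsRatFn f) (n : ℕ) : gap f n ≠ 0 := by
  intro h0
  have hgap : f * sQ f n = sP f n := by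
    have := sub_eq_zero.mp h0
    exact this
  by_cases hq : pQ f n = 0
  · have hsQ : sQ f n = 0 := by rw [← (av_pPQ f n).2, hq]; exact map_zero (Polynomial.aeval Zl)
    have hsP : sP f n = 0 := by rw [← hgap, hsQ, mul_zero]
    have hpP : pP f n = 0 := by
      apply av_injective
      rw [(av_pPQ f n).1, hsP]; exact (map_zero (Polynomial.aeval Zl)).symm
    exact not_both_zero f n ⟨hpP, hq⟩
  · apply hf
    refine ⟨pP f n, pQ f n, hq, ?_⟩
    show f * av (pQ f n) = av (pP f n)
    rw [(av_pPQ f n).1, (av_pPQ f n).2, hgap]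

lemma sQ_two (f : LS) : sQ f 2 = 1 := by simp [sQ]
lemma sQ_three (f : LS) : sQ f 3 = cfa f 1 := by simp [sQ]

lemma sQ_facts {f : LS} (hf : ¬ IsRatFn f) : ∀ n : ℕ,
    sQ f (n+2) ≠ 0 ∧ sQ f (n+3) ≠ 0 ∧ 0 ≤ ldeg (sQ f (n+2)) ∧
    ldeg (sQ f (n+2)) < ldeg (sQ f (n+3)) ∧
    ldeg (sQ f (n+3)) = ldeg (cfa f (n+1)) + ldeg (sQ f (n+2)) := by
  intro n
  induction n with
  | zero =>
    simp only [show (0:ℕ)+2 = 2 from rfl, show (0:ℕ)+3 = 3 from rfl, show (0:ℕ)+1 = 1 from rfl]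
    rw [sQ_two, sQ_three]
    have hp := ldeg_cfa_pos' hf (n := 1) one_ne_zero
    refine ⟨one_ne_zero, cfa_ne_zero' hf one_ne_zero, ?_, ?_, ?_⟩ <;>
      simp only [ldeg_one] <;> omega
  | succ n ih =>
    simp only [show n+1+2 = n+3 from rfl, show n+1+3 = n+4 from rfl,
      show n+1+1 = n+2 from rfl]
    obtain ⟨h2, h3, h2n, hlt, heq⟩ := ih
    have ha : cfa f (n+2) ≠ 0 := cfa_ne_zero' hf (by omega)
    have hap : 1 ≤ ldeg (cfa f (n+2)) := ldeg_cfa_pos' hf (by omega)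
    have hmul : cfa f (n+2) * sQ f (n+3) ≠ 0 := mul_ne_zero ha h3
    have hmul_ldeg : ldeg (cfa f (n+2) * sQ f (n+3)) = ldeg (cfa f (n+2)) + ldeg (sQ f (n+3)) :=
      ldeg_mul ha h3
    have hrec : sQ f (n+4) = cfa f (n+2) * sQ f (n+3) + sQ f (n+2) := rfl
    have hdom : ldeg (sQ f (n+2)) < ldeg (cfa f (n+2) * sQ f (n+3)) := by
      rw [hmul_ldeg]; omega
    have h4 := ldeg_add_eq_left hmul h2 hdom
    rw [← hrec] at h4
    refine ⟨h3, h4.1, by omega, ?_, ?_⟩ <;>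
      (try rw [h4.2, hmul_ldeg]) <;> omega

lemma gap_two (f : LS) : gap f 2 = f - cfa f 0 := by
  simp [gap, sQ, sP]

lemma gap_ldeg {f : LS} (hf : ¬ IsRatFn f) : ∀ n : ℕ,
    ldeg (gap f (n+2)) = -ldeg (sQ f (n+3)) := by
  intro n
  induction n with
  | zero =>
    simp only [show (0:ℕ)+2 = 2 from rfl, show (0:ℕ)+3 = 3 from rfl]
    rw [gap_two, sQ_three]
    have h1 : f - cfa f 0 = (Fseq f 1)⁻¹ := by
      rw [show Fseq f 1 = (Fseq f 0 - polyPart (Fseq f 0))⁻¹ from rfl, inv_inv]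
      rfl
    rw [h1, ldeg_inv (Fseq_ne_zero hf 1), ldeg_cfa' hf (n := 1) one_ne_zero]
  | succ n ih =>
    simp only [show n+1+2 = n+3 from rfl, show n+1+3 = n+4 from rfl]
    have hrec := gap_rec hf (n+2)
    have hg3 : gap f (n+3) ≠ 0 := gap_ne_zero hf (n+3)
    have hF : Fseq f (n+2) ≠ 0 := Fseq_ne_zero hf (n+2)
    have hml := ldeg_mul hg3 hF
    rw [hrec, ldeg_neg] at hml
    have hFa : ldeg (Fseq f (n+2)) = ldeg (cfa f (n+2)) := (ldeg_cfa' hf (by omega)).symm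
    have hS := (sQ_facts hf (n+1)).2.2.2.2
    simp only [show n+1+2 = n+3 from rfl, show n+1+3 = n+4 from rfl,
      show n+1+1 = n+2 from rfl] at hS
    rw [ih] at hml
    omega

lemma ldeg_sQ_ge {f : LS} (hf : ¬ IsRatFn f) : ∀ n : ℕ, (n : ℤ) ≤ ldeg (sQ f (n+2)) := by
  intro n
  induction n with
  | zero =>
    simp only [show (0:ℕ)+2 = 2 from rfl]
    rw [sQ_two, ldeg_one]
    simp
  | succ n ih =>
    simp only [show n+1+2 = n+3 from rfl]
    have := (sQ_facts hf n).2.2.2.1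
    push_cast
    omega

lemma exists_index {f : LS} (hf : ¬ IsRatFn f) (D : ℤ) (hD : 0 ≤ D) :
    ∃ n : ℕ, ldeg (sQ f (n+2)) ≤ D ∧ D < ldeg (sQ f (n+3)) := by
  have hex : ∃ n : ℕ, D < ldeg (sQ f (n+3)) := by
    refine ⟨D.toNat, ?_⟩
    have h := ldeg_sQ_ge hf (D.toNat + 1)
    simp only [show D.toNat+1+2 = D.toNat+3 from rfl] at h
    have h2 : (D.toNat + 1 : ℤ) = ((D.toNat + 1 : ℕ) : ℤ) := by push_cast; ring
    omega
  classical
  let n₀ := Nat.find hex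
  have h1 : D < ldeg (sQ f (n₀+3)) := Nat.find_spec hex
  refine ⟨n₀, ?_, h1⟩
  match hn : n₀ with
  | 0 => rw [sQ_two, ldeg_one]; exact hD
  | (m+1) =>
    have := Nat.find_min hex (by omega : m < n₀)
    push_neg at this
    simpa using this

lemma hs_unit (n : ℕ) : ((-1:Polynomial ℚ)^(n+2)) * ((-1:Polynomial ℚ)^(n+2)) = 1 := by
  rw [← pow_add]
  exact Even.neg_one_pow ⟨n+2, by ring⟩

end CC

open CC

/-- criterion for convergents: for coprime p, q ∈ ℚ[z] with q ≠ 0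
and a non-rational f ∈ ℚ((z⁻¹)), deg(q f - p) < -deg q holds if and only if p/q
is a convergent of the continued fraction expansion of f. -/
theorem convergent_criterion (f : LS) (hf : ¬ IsRatFn f)
    (p q : Polynomial ℚ) (hq : q ≠ 0) (hcop : IsCoprime p q) :
    ldeg (Polynomial.aeval Zl q * f - Polynomial.aeval Zl p) < -(q.natDegree : ℤ) ↔
      ∃ n : ℕ, Polynomial.aeval Zl p / Polynomial.aeval Zl q
        = cfP (cfa f) n / cfQ (cfa f) n := by
  have havq : av q ≠ 0 := av_ne_zero hq
  have hdegq : ldeg (av q) = q.natDegree := ldeg_av hq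
  constructor
  · -- hypothesis on degree ⇒ convergent
    intro hdeg
    have hdeg' : ldeg (av q * f - av p) < -(q.natDegree : ℤ) := hdeg
    obtain ⟨n, hn1, hn2⟩ := exists_index hf (q.natDegree : ℤ) (by positivity)
    have hdet := det_pPQ f (n+2)
    simp only [show n+2+1 = n+3 from rfl] at hdet
    have hs := hs_unit n
    set x : Polynomial ℚ := (-1)^(n+2) * (pP f (n+3) * q - pQ f (n+3) * p) with hxdef
    set y : Polynomial ℚ := (-1)^(n+2) * (pQ f (n+2) * p - pP f (n+2) * q) with hydef
    have hxP : x * pP f (n+2) + y * pP f (n+3) = p := by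
      have h1 : x * pP f (n+2) + y * pP f (n+3)
          = (pP f (n+3) * pQ f (n+2) - pP f (n+2) * pQ f (n+3)) * ((-1)^(n+2) * p) := by
        rw [hxdef, hydef]; ring
      rw [h1, hdet]
      linear_combination p * hs
    have hxQ : x * pQ f (n+2) + y * pQ f (n+3) = q := by
      have h1 : x * pQ f (n+2) + y * pQ f (n+3)
          = (pP f (n+3) * pQ f (n+2) - pP f (n+2) * pQ f (n+3)) * ((-1)^(n+2) * q) := by
        rw [hxdef, hydef]; ring
      rw [h1, hdet]
      linear_combination q * hs
    have havp_eq : av p = av x * sP f (n+2) + av y * sP f (n+3) := by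
      rw [← hxP]
      rw [show av (x * pP f (n+2) + y * pP f (n+3))
          = av x * av (pP f (n+2)) + av y * av (pP f (n+3)) by simp [av, map_add, map_mul]]
      rw [(av_pPQ f (n+2)).1, (av_pPQ f (n+3)).1]
    have havq_eq : av q = av x * sQ f (n+2) + av y * sQ f (n+3) := by
      rw [← hxQ]
      rw [show av (x * pQ f (n+2) + y * pQ f (n+3))
          = av x * av (pQ f (n+2)) + av y * av (pQ f (n+3)) by simp [av, map_add, map_mul]]
      rw [(av_pPQ f (n+2)).2, (av_pPQ f (n+3)).2]
    by_cases hy : y = 0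
    · -- p/q = p_n/q_n
      have hx0 : x ≠ 0 := by
        intro h0
        apply hq
        rw [← hxQ, h0, hy]; ring
      have hdvdp : x ∣ p := ⟨pP f (n+2), by rw [← hxP, hy]; ring⟩
      have hdvdq : x ∣ q := ⟨pQ f (n+2), by rw [← hxQ, hy]; ring⟩
      have hX : av x ≠ 0 := av_ne_zero hx0
      refine ⟨n, ?_⟩
      have hY0 : av y = 0 := by rw [hy]; exact map_zero (Polynomial.aeval Zl)
      show av p / av q = cfP (cfa f) n / cfQ (cfa f) n
      rw [(cfPQ_eq f n).1, (cfPQ_eq f n).2, havp_eq, havq_eq, hY0, zero_mul, zero_mul, add_zero, add_zero,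
        mul_div_mul_left _ _ hX]
    · -- contradiction
      exfalso
      have hY : av y ≠ 0 := av_ne_zero hy
      have hY0 : (0:ℤ) ≤ ldeg (av y) := ldeg_av_nonneg hy
      obtain ⟨hQ2, hQ3, hQ2n, h23, -⟩ := sQ_facts hf n
      have hS1 := sQ_facts hf (n+1)
      simp only [show n+1+2 = n+3 from rfl, show n+1+3 = n+4 from rfl] at hS1
      obtain ⟨-, hQ4, -, h34, -⟩ := hS1
      have hG2 := gap_ldeg hf n
      have hG3 := gap_ldeg hf (n+1)
      simp only [show n+1+2 = n+3 from rfl, show n+1+3 = n+4 from rfl] at hG3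
      have hgne2 : gap f (n+2) ≠ 0 := gap_ne_zero hf (n+2)
      have hgne3 : gap f (n+3) ≠ 0 := gap_ne_zero hf (n+3)
      have hx0 : x ≠ 0 := by
        intro h0
        have hX0 : av x = 0 := by rw [h0]; exact map_zero (Polynomial.aeval Zl)
        rw [hX0, zero_mul, zero_add] at havq_eq
        have := ldeg_mul hY hQ3
        rw [← havq_eq, hdegq] at this
        omega
      have hX : av x ≠ 0 := av_ne_zero hx0
      have hX0 : (0:ℤ) ≤ ldeg (av x) := ldeg_av_nonneg hx0
      -- balance of degrees
      have hbal : ldeg (av x) + ldeg (sQ f (n+2)) = ldeg (av y) + ldeg (sQ f (n+3)) := by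
        by_contra hne
        have hXQ2 : av x * sQ f (n+2) ≠ 0 := mul_ne_zero hX hQ2
        have hYQ3 : av y * sQ f (n+3) ≠ 0 := mul_ne_zero hY hQ3
        have hm1 : ldeg (av x * sQ f (n+2)) = ldeg (av x) + ldeg (sQ f (n+2)) := ldeg_mul hX hQ2
        have hm2 : ldeg (av y * sQ f (n+3)) = ldeg (av y) + ldeg (sQ f (n+3)) := ldeg_mul hY hQ3
        rcases lt_or_gt_of_ne (by omega : ldeg (av x * sQ f (n+2)) ≠ ldeg (av y * sQ f (n+3)))
          with hlt | hgt
        · have h4 := ldeg_add_eq_left hYQ3 hXQ2 hlt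
          rw [add_comm (av x * sQ f (n+2))] at havq_eq
          rw [← havq_eq] at h4
          rw [hdegq] at h4
          omega
        · have h4 := ldeg_add_eq_left hXQ2 hYQ3 hgt
          rw [← havq_eq] at h4
          rw [hdegq] at h4
          omega
      have hgapsum : av q * f - av p = av x * gap f (n+2) + av y * gap f (n+3) := by
        simp only [gap]
        rw [havp_eq, havq_eq]
        ring
      have hd1 : ldeg (av x * gap f (n+2)) = ldeg (av x) + ldeg (gap f (n+2)) :=
        ldeg_mul hX hgne2
      have hd2 : ldeg (av y * gap f (n+3)) = ldeg (av y) + ldeg (gap f (n+3)) :=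
        ldeg_mul hY hgne3
      have hdd : ldeg (av y * gap f (n+3)) < ldeg (av x * gap f (n+2)) := by
        rw [hd1, hd2, hG2, hG3]
        omega
      have h4 := ldeg_add_eq_left (mul_ne_zero hX hgne2) (mul_ne_zero hY hgne3) hdd
      rw [← hgapsum] at h4
      rw [h4.2] at hdeg'
      rw [hd1, hG2] at hdeg'
      omega
  · -- convergent ⇒ degree bound
    rintro ⟨n, heq⟩
    have heq' : av p / av q = sP f (n+2) / sQ f (n+2) := by
      rw [show (Polynomial.aeval Zl p / Polynomial.aeval Zl q : LS)
          = av p / av q from rfl] at heq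
      rw [heq, (cfPQ_eq f n).1, (cfPQ_eq f n).2]
    obtain ⟨hQ2, hQ3, hQ2n, h23, -⟩ := sQ_facts hf n
    have hpQ2 : pQ f (n+2) ≠ 0 := by
      intro h0
      apply hQ2
      rw [← (av_pPQ f (n+2)).2, h0]
      exact map_zero (Polynomial.aeval Zl)
    have hcross : av p * sQ f (n+2) = sP f (n+2) * av q :=
      (div_eq_div_iff havq hQ2).mp heq'
    have hpoly : p * pQ f (n+2) = pP f (n+2) * q := by
      apply av_injective
      rw [show av (p * pQ f (n+2)) = av p * av (pQ f (n+2)) by simp [av, map_mul]]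
      rw [show av (pP f (n+2) * q) = av (pP f (n+2)) * av q by simp [av, map_mul]]
      rw [(av_pPQ f (n+2)).1, (av_pPQ f (n+2)).2, hcross]
    -- q and pQ f (n+2) are associated
    have hq_dvd : q ∣ pQ f (n+2) := by
      have h1 : q ∣ p * pQ f (n+2) := ⟨pP f (n+2), by rw [hpoly]; ring⟩
      exact (hcop.symm.dvd_of_dvd_mul_left h1)
    have hpQ_dvd : pQ f (n+2) ∣ q := by
      have h1 : pQ f (n+2) ∣ pP f (n+2) * q := ⟨p, by rw [← hpoly]; ring⟩
      exact ((coprime_pPQ f (n+2)).symm.dvd_of_dvd_mul_left h1)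
    obtain ⟨u, hu⟩ := (associated_of_dvd_dvd hpQ_dvd hq_dvd)
    -- hu : pQ f (n+2) * u = q
    have hup : p = pP f (n+2) * (u : Polynomial ℚ) := by
      have h2 : p * pQ f (n+2) = (pP f (n+2) * (u : Polynomial ℚ)) * pQ f (n+2) := by
        rw [hpoly, ← hu]; ring
      exact mul_right_cancel₀ hpQ2 h2
    have hune : (u : Polynomial ℚ) ≠ 0 := Units.ne_zero u
    have havu : av (u : Polynomial ℚ) ≠ 0 := av_ne_zero hune
    have hudeg : ldeg (av (u : Polynomial ℚ)) = 0 := by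
      rw [ldeg_av hune, Polynomial.natDegree_eq_zero_of_isUnit u.isUnit]
      rfl
    have hgap2 : av q * f - av p = av (u : Polynomial ℚ) * gap f (n+2) := by
      have h1 : av q = sQ f (n+2) * av (u : Polynomial ℚ) := by
        rw [← hu]
        rw [show av (pQ f (n+2) * (u : Polynomial ℚ))
            = av (pQ f (n+2)) * av (u : Polynomial ℚ) by simp [av, map_mul]]
        rw [(av_pPQ f (n+2)).2]
      have h2 : av p = sP f (n+2) * av (u : Polynomial ℚ) := by
        rw [hup]
        rw [show av (pP f (n+2) * (u : Polynomial ℚ))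
            = av (pP f (n+2)) * av (u : Polynomial ℚ) by simp [av, map_mul]]
        rw [(av_pPQ f (n+2)).1]
      rw [h1, h2, gap]
      ring
    have hqdeg : (q.natDegree : ℤ) = ldeg (sQ f (n+2)) := by
      have h1 : av q = sQ f (n+2) * av (u : Polynomial ℚ) := by
        rw [← hu]
        rw [show av (pQ f (n+2) * (u : Polynomial ℚ))
            = av (pQ f (n+2)) * av (u : Polynomial ℚ) by simp [av, map_mul]]
        rw [(av_pPQ f (n+2)).2]
      have := ldeg_mul hQ2 havu
      rw [← h1, hdegq, hudeg] at this
      omega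
    show ldeg (av q * f - av p) < -(q.natDegree : ℤ)
    rw [hgap2, ldeg_mul havu (gap_ne_zero hf (n+2)), hudeg, gap_ldeg hf n, hqdeg]
    omega
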